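/- Let A be a C*-algebra and p a full projection in A. If pAp is simple and purely infinite, then A is simple and purely infinite. -/

import Mathlib

variable {A : Type*} [NonUnitalCStarAlgebra A] [PartialOrder A] [StarOrderedRing A]

/-- `J` is an ideal of the subalgebra of `A` whose carrier is the set `S`. -/
def IsIdealIn (S J : Set A) : Prop :=
  J ⊆ S ∧ (0 : A) ∈ J ∧ (∀ x ∈ J, ∀ y ∈ J, x + y ∈ J) ∧
    (∀ (c : ℂ), ∀ x ∈ J, c • x ∈ J) ∧
    (∀ x ∈ J, ∀ s ∈ S, s * x ∈ J ∧ x * s ∈ J)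

/-- The C*-algebra with carrier set `S ⊆ A` is simple. -/
def SimpleOn (S : Set A) : Prop :=
  ∀ J : Set A, IsIdealIn S J → IsClosed J → J = {0} ∨ J = S

/-- The C*-algebra with carrier set `S ⊆ A` is purely infinite: each of its nonzero
hereditary C*-subalgebras contains an infinite projection, i.e. a projection `e` which
is Murray–von Neumann equivalent (via `s ∈ S`) to a proper subprojection of itself. -/
def PurelyInfiniteOn (S : Set A) : Prop :=
  ∀ h ∈ S, 0 ≤ h → h ≠ 0 →
    ∃ e s : A, e ∈ S ∧ s ∈ S ∧ IsIdempotentElem e ∧ star e = e ∧ e ≠ 0 ∧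
      e ∈ closure {z : A | ∃ y ∈ S, z = h * y * h} ∧
      star s * s = e ∧ e * (s * star s) = s * star s ∧ s * star s ≠ e

/-- The corner `pAp` as a subset of `A`. -/
def CornerSet (p : A) : Set A := {x : A | x = p * x * p}


set_option linter.unusedSectionVars false


noncomputable def cornerAux (ε : ℝ) : ℝ → ℝ := fun t => Real.sqrt t * (|t| + ε)⁻¹

lemma cornerAux_cont {ε : ℝ} (hε : 0 < ε) : Continuous (cornerAux ε) := by
  apply Real.continuous_sqrt.mul
  exact ((continuous_abs.add continuous_const).inv₀ (fun t => by show |t| + ε ≠ 0; positivity))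

lemma cornerAux_zero (ε : ℝ) : cornerAux ε 0 = 0 := by simp [cornerAux]

lemma cornerAux_val {ε δ t : ℝ} (hε : 0 < ε) (hδ : 0 < δ) (ht : 0 ≤ t) :
    cornerAux ε t * t * cornerAux δ t = t^2 / ((t+ε)*(t+δ)) := by
  have hs := Real.mul_self_sqrt ht
  simp only [cornerAux, abs_of_nonneg ht]
  field_simp
  ring_nf
  nlinarith [hs]

lemma cornerAux_bound1 {ε δ t : ℝ} (hε : 0 < ε) (hδ : 0 < δ) (ht : 0 ≤ t) :
    |cornerAux ε t * t * cornerAux δ t| ≤ 1 := by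
  rw [cornerAux_val hε hδ ht, abs_of_nonneg (by positivity)]
  rw [div_le_one (by positivity)]
  nlinarith

lemma cornerAux_bound2 {ε δ t : ℝ} (hε : 0 < ε) (hδ : 0 < δ) (ht : 0 ≤ t) :
    |cornerAux ε t * t * cornerAux δ t * t - t| ≤ 2*(ε+δ) := by
  rw [cornerAux_val hε hδ ht]
  have hD : 0 < (t+ε)*(t+δ) := by positivity
  rw [abs_of_nonpos (by
    rw [sub_nonpos, div_mul_eq_mul_div, div_le_iff₀ hD]
    nlinarith [mul_nonneg ht (mul_nonneg hε.le hδ.le), mul_nonneg (mul_nonneg ht ht) hε.le,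
      mul_nonneg (mul_nonneg ht ht) hδ.le])]
  rw [neg_sub, div_mul_eq_mul_div]
  have key : t - t^2*t/((t+ε)*(t+δ)) = (t*((t+ε)*(t+δ)) - t^2*t)/((t+ε)*(t+δ)) := by
    field_simp
  rw [key, div_le_iff₀ hD]
  nlinarith [mul_nonneg ht (mul_nonneg hε.le hδ.le), sq_nonneg t, mul_nonneg (mul_nonneg ht ht) hε.le,
    mul_nonneg (mul_nonneg ht ht) hδ.le, mul_nonneg (mul_nonneg hε.le hδ.le) hδ.le,
    mul_nonneg (mul_nonneg hε.le hδ.le) hε.le, mul_nonneg (mul_nonneg ht hδ.le) hδ.le,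
    mul_nonneg (mul_nonneg ht hε.le) hε.le, mul_nonneg (mul_nonneg ht hε.le) hδ.le]

lemma cfcProd {a : A} (ha : 0 ≤ a) {ε δ : ℝ} (hε : 0 < ε) (hδ : 0 < δ) :
    cfcₙ (cornerAux ε) a * a * cfcₙ (cornerAux δ) a
      = cfcₙ (fun t => cornerAux ε t * t * cornerAux δ t) a := by
  have hsa : IsSelfAdjoint a := .of_nonneg ha
  have h1 : cfcₙ (fun t : ℝ => cornerAux ε t * t) a = cfcₙ (cornerAux ε) a * a := by
    have h := cfcₙ_mul (cornerAux ε) (fun t : ℝ => t) a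
      ((cornerAux_cont hε).continuousOn) (cornerAux_zero ε)
      (continuous_id.continuousOn) rfl
    rw [h, cfcₙ_id' ℝ a]
  have h2 := cfcₙ_mul (fun t : ℝ => cornerAux ε t * t) (cornerAux δ) a
    (((cornerAux_cont hε).mul continuous_id).continuousOn) (by simp [cornerAux_zero])
    ((cornerAux_cont hδ).continuousOn) (cornerAux_zero δ)
  rw [h2, h1]

lemma cfcNormLeOne {a : A} (ha : 0 ≤ a) {ε δ : ℝ} (hε : 0 < ε) (hδ : 0 < δ) :
    ‖cfcₙ (fun t => cornerAux ε t * t * cornerAux δ t) a‖ ≤ 1 :=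
  norm_cfcₙ_le fun t ht => by
    rw [Real.norm_eq_abs]
    exact cornerAux_bound1 hε hδ (quasispectrum_nonneg_of_nonneg a ha t ht)

lemma cfcNormSub {a : A} (ha : 0 ≤ a) {ε δ : ℝ} (hε : 0 < ε) (hδ : 0 < δ) :
    ‖cfcₙ (fun t => cornerAux ε t * t * cornerAux δ t) a * a - a‖ ≤ 2*(ε+δ) := by
  have hsa : IsSelfAdjoint a := .of_nonneg ha
  have hΦ : Continuous (fun t : ℝ => cornerAux ε t * t * cornerAux δ t) :=
    ((cornerAux_cont hε).mul continuous_id).mul (cornerAux_cont hδ)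
  have h1 : cfcₙ (fun t : ℝ => cornerAux ε t * t * cornerAux δ t) a * a
      = cfcₙ (fun t : ℝ => cornerAux ε t * t * cornerAux δ t * t) a := by
    have h := cfcₙ_mul (fun t : ℝ => cornerAux ε t * t * cornerAux δ t) (fun t : ℝ => t) a
      (hΦ.continuousOn) (by simp [cornerAux_zero]) (continuous_id.continuousOn) rfl
    rw [h, cfcₙ_id' ℝ a]
  have h2 : cfcₙ (fun t : ℝ => cornerAux ε t * t * cornerAux δ t * t) a - a
      = cfcₙ (fun t : ℝ => cornerAux ε t * t * cornerAux δ t * t - t) a := by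
    have h := cfcₙ_sub (fun t : ℝ => cornerAux ε t * t * cornerAux δ t * t) (fun t : ℝ => t) a
      ((hΦ.mul continuous_id).continuousOn) (by simp [cornerAux_zero])
      (continuous_id.continuousOn)
    rw [h, cfcₙ_id' ℝ a]
  rw [h1, h2]
  exact norm_cfcₙ_le fun t ht => by
    rw [Real.norm_eq_abs]
    exact cornerAux_bound2 hε hδ (quasispectrum_nonneg_of_nonneg a ha t ht)

lemma approxUnit {a : A} (ha : 0 ≤ a) {b : A}
    (hb : b ∈ closure {w : A | ∃ y : A, w = a * y * a}) {η : ℝ} (hη : 0 < η) :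
    ∃ ε₀ : ℝ, 0 < ε₀ ∧ ∀ ε δ : ℝ, 0 < ε → ε ≤ ε₀ → 0 < δ → δ ≤ ε₀ →
      ‖cfcₙ (cornerAux ε) a * a * cfcₙ (cornerAux δ) a * b - b‖ ≤ η := by
  obtain ⟨w, hw, hwb⟩ := Metric.mem_closure_iff.mp hb (η/3) (by positivity)
  obtain ⟨y, rfl⟩ := hw
  refine ⟨η/(12*(‖y*a‖+1)), by positivity, fun ε δ hε hεle hδ hδle => ?_⟩
  set P := cfcₙ (fun t => cornerAux ε t * t * cornerAux δ t) a with hP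
  have hPd : cfcₙ (cornerAux ε) a * a * cfcₙ (cornerAux δ) a = P := cfcProd ha hε hδ
  rw [hPd]
  have key : P * b - b = P * (b - a*y*a) + (P * a - a) * (y*a) + (a*y*a - b) := by
    rw [mul_sub, sub_mul, mul_assoc, mul_assoc]
    abel
  rw [key]
  have h1 : ‖P * (b - a*y*a)‖ ≤ η/3 := by
    calc ‖P * (b - a*y*a)‖ ≤ ‖P‖ * ‖b - a*y*a‖ := norm_mul_le _ _
    _ ≤ 1 * (η/3) := by
        apply mul_le_mul (cfcNormLeOne ha hε hδ) ?_ (norm_nonneg _) zero_le_one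
        rw [← dist_eq_norm]
        exact hwb.le
    _ = η/3 := one_mul _
  have h2 : ‖(P * a - a) * (y*a)‖ ≤ η/3 := by
    calc ‖(P * a - a) * (y*a)‖ ≤ ‖P * a - a‖ * ‖y*a‖ := norm_mul_le _ _
    _ ≤ (2*(ε+δ)) * (‖y*a‖+1) := by
        apply mul_le_mul (cfcNormSub ha hε hδ) (by linarith [norm_nonneg (y*a)])
          (norm_nonneg _) (by positivity)
    _ ≤ η/3 := by
        have hpos : (0:ℝ) < ‖y*a‖+1 := by positivity
        have : ε + δ ≤ 2 * (η/(12*(‖y*a‖+1))) := by linarith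
        calc (2*(ε+δ)) * (‖y*a‖+1) ≤ (2*(2 * (η/(12*(‖y*a‖+1))))) * (‖y*a‖+1) := by
              apply mul_le_mul_of_nonneg_right (by linarith) hpos.le
        _ = η/3 := by field_simp; ring
  have h3 : ‖a*y*a - b‖ ≤ η/3 := by
    rw [← norm_neg, neg_sub, ← dist_eq_norm]
    exact hwb.le
  calc ‖P * (b - a*y*a) + (P * a - a) * (y*a) + (a*y*a - b)‖
      ≤ ‖P * (b - a*y*a) + (P * a - a) * (y*a)‖ + ‖a*y*a - b‖ := norm_add_le _ _
    _ ≤ ‖P * (b - a*y*a)‖ + ‖(P * a - a) * (y*a)‖ + ‖a*y*a - b‖ := by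
        gcongr; exact norm_add_le _ _
    _ ≤ η/3 + η/3 + η/3 := by gcongr
    _ = η := by ring

lemma cornerSet_closed (p : A) : IsClosed (CornerSet p) :=
  isClosed_eq continuous_id (by fun_prop)

lemma sandwich_mem_corner {p : A} (hpp : p * p = p) (x : A) : p * x * p ∈ CornerSet p := by
  show p * x * p = p * (p * x * p) * p
  rw [← mul_assoc, ← mul_assoc, hpp, mul_assoc (p*x) p p, hpp]

lemma p_mem_corner {p : A} (hpp : p * p = p) : p ∈ CornerSet p := by
  show p = p * p * p
  rw [hpp, hpp]

lemma corner_mul_left {p : A} (hpp : p * p = p) {x : A} (hx : x ∈ CornerSet p) :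
    p * x = x := by
  nth_rewrite 2 [hx]
  nth_rewrite 1 [hx]
  rw [← mul_assoc, ← mul_assoc, hpp]

lemma corner_mul_right {p : A} (hpp : p * p = p) {x : A} (hx : x ∈ CornerSet p) :
    x * p = x := by
  nth_rewrite 2 [hx]
  nth_rewrite 1 [hx]
  rw [mul_assoc, mul_assoc, hpp, mul_assoc]

theorem simple_part (p : A) (hp_proj : IsIdempotentElem p ∧ star p = p)
    (hfull : ∀ I : TwoSidedIdeal A, IsClosed (I : Set A) → p ∈ I → I = ⊤)
    (hcorner_simple : SimpleOn (CornerSet p)) :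
    SimpleOn (Set.univ : Set A) := by
  intro J hJ hJcl
  obtain ⟨-, hJ0, hJadd, hJsmul, hJmul⟩ := hJ
  have hpp : p * p = p := hp_proj.1
  set K : Set A := J ∩ CornerSet p with hKdef
  have hKideal : IsIdealIn (CornerSet p) K := by
    refine ⟨Set.inter_subset_right, ⟨hJ0, by simp [CornerSet]⟩, ?_, ?_, ?_⟩
    · rintro x ⟨hxJ, hxC⟩ y ⟨hyJ, hyC⟩
      refine ⟨hJadd x hxJ y hyJ, ?_⟩
      show x + y = p * (x + y) * p
      rw [mul_add, add_mul, ← hxC, ← hyC]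
    · rintro c x ⟨hxJ, hxC⟩
      refine ⟨hJsmul c x hxJ, ?_⟩
      show c • x = p * (c • x) * p
      rw [mul_smul_comm, smul_mul_assoc, ← hxC]
    · rintro x ⟨hxJ, hxC⟩ s hsC
      constructor
      · refine ⟨(hJmul x hxJ s trivial).1, ?_⟩
        show s * x = p * (s * x) * p
        rw [← mul_assoc p s x, corner_mul_left hpp hsC, mul_assoc s x p,
          corner_mul_right hpp hxC]
      · refine ⟨(hJmul x hxJ s trivial).2, ?_⟩
        show x * s = p * (x * s) * p
        rw [← mul_assoc p x s, corner_mul_left hpp hxC, mul_assoc x s p,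
          corner_mul_right hpp hsC]
  have hKcl : IsClosed K := hJcl.inter (cornerSet_closed p)
  rcases hcorner_simple K hKideal hKcl with h0 | hC
  · -- K = {0} : show J = {0}
    left
    have hpx : ∀ x ∈ J, p * x = 0 := by
      intro x hx
      have hmemJ : p * (x * star x) * p ∈ J := by
        have h1 := (hJmul x hx (star x) trivial).2
        have h2 := (hJmul _ h1 p trivial).1
        exact (hJmul _ h2 p trivial).2
      have hmemK : p * (x * star x) * p ∈ K := ⟨hmemJ, sandwich_mem_corner hpp _⟩
      rw [h0] at hmemK
      have hz : p * (x * star x) * p = 0 := hmemK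
      have : (p * x) * star (p * x) = 0 := by
        rw [star_mul, hp_proj.2, ← hz]
        rw [mul_assoc, mul_assoc, mul_assoc]
      exact CStarRing.mul_star_self_eq_zero_iff (p*x) |>.mp this
    set L : TwoSidedIdeal A := TwoSidedIdeal.mk' {y : A | ∀ x ∈ J, y * x = 0}
      (fun x hx => by simp)
      (fun {y z} hy hz x hx => by rw [add_mul, hy x hx, hz x hx, add_zero])
      (fun {y} hy x hx => by rw [neg_mul, hy x hx, neg_zero])
      (fun {c y} hy x hx => by rw [mul_assoc, hy x hx, mul_zero])
      (fun {y c} hy x hx => by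
        rw [mul_assoc]
        exact hy (c * x) ((hJmul x hx c trivial).1)) with hLdef
    have hLmem : ∀ y : A, y ∈ L ↔ ∀ x ∈ J, y * x = 0 := fun y =>
      TwoSidedIdeal.mem_mk' _ _ _ _ _ _ y
    have hLcl : IsClosed (L : Set A) := by
      have hcoe : (L : Set A) = ⋂ x ∈ J, {y : A | y * x = 0} := by
        ext y
        simp only [SetLike.mem_coe, hLmem, Set.mem_iInter, Set.mem_setOf_eq]
      rw [hcoe]
      exact isClosed_biInter fun x hx => isClosed_eq (by fun_prop) continuous_const
    have hLtop : L = ⊤ := hfull L hLcl ((hLmem p).mpr hpx)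
    have : ∀ x ∈ J, x = 0 := by
      intro x hx
      have hsx : star x ∈ L := by rw [hLtop]; exact TwoSidedIdeal.mem_top A
      have := (hLmem (star x)).mp hsx x hx
      exact CStarRing.star_mul_self_eq_zero_iff x |>.mp this
    ext x
    simp only [Set.mem_singleton_iff]
    exact ⟨fun hx => this x hx, fun hx => hx ▸ hJ0⟩
  · -- K = CornerSet p : show J = univ
    right
    have hpJ : p ∈ J := by
      have : p ∈ K := by rw [hC]; exact p_mem_corner hpp
      exact this.1
    set M : TwoSidedIdeal A := TwoSidedIdeal.mk' J hJ0
      (fun {x y} hx hy => hJadd x hx y hy)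
      (fun {x} hx => by
        have := hJsmul (-1) x hx
        rwa [neg_one_smul] at this)
      (fun {x y} hy => (hJmul y hy x trivial).1)
      (fun {x y} hx => (hJmul x hx y trivial).2) with hMdef
    have hMmem : ∀ y : A, y ∈ M ↔ y ∈ J := fun y => TwoSidedIdeal.mem_mk' _ _ _ _ _ _ y
    have hMcl : IsClosed (M : Set A) := by
      have hcoe : (M : Set A) = J := by ext y; simp only [SetLike.mem_coe, hMmem]
      rw [hcoe]; exact hJcl
    have hMtop : M = ⊤ := hfull M hMcl ((hMmem p).mpr hpJ)
    apply Set.eq_univ_of_forall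
    intro x
    have : x ∈ M := by rw [hMtop]; exact TwoSidedIdeal.mem_top A
    exact (hMmem x).mp this

lemma norm_lt_aux (x : A) {r : ℝ} (hr : 0 < r) (hx : ‖star x * x‖ < r * r) : ‖x‖ < r := by
  by_contra hc
  push_neg at hc
  have h1 := CStarRing.norm_star_mul_self (x := x)
  nlinarith [norm_nonneg x]

theorem pi_part (p : A) (hp_proj : IsIdempotentElem p ∧ star p = p)
    (hfull : ∀ I : TwoSidedIdeal A, IsClosed (I : Set A) → p ∈ I → I = ⊤)
    (hcorner_pi : PurelyInfiniteOn (CornerSet p)) :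
    PurelyInfiniteOn (Set.univ : Set A) := by
  intro h _ hh0 hhne
  have hpp : p * p = p := hp_proj.1
  have hps : star p = p := hp_proj.2
  have hsh : star h = h := (IsSelfAdjoint.of_nonneg hh0)
  -- Step A : find c with h * c * p ≠ 0
  have hstepA : ∃ c : A, h * c * p ≠ 0 := by
    by_contra hcon
    push_neg at hcon
    set R : TwoSidedIdeal A := TwoSidedIdeal.mk' {y : A | ∀ c : A, h * c * y = 0}
      (fun c => mul_zero _)
      (fun {x y} hx hy c => by rw [mul_add, hx c, hy c, add_zero])
      (fun {x} hx c => by rw [mul_neg, hx c, neg_zero])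
      (fun {x y} hy c => by rw [← mul_assoc, mul_assoc h c x]; exact hy (c * x))
      (fun {x y} hx c => by rw [← mul_assoc, hx c, zero_mul]) with hRdef
    have hRmem : ∀ y : A, y ∈ R ↔ ∀ c : A, h * c * y = 0 := fun y =>
      TwoSidedIdeal.mem_mk' _ _ _ _ _ _ y
    have hRcl : IsClosed (R : Set A) := by
      have hcoe : (R : Set A) = ⋂ c : A, {y : A | h * c * y = 0} := by
        ext y
        simp only [SetLike.mem_coe, hRmem, Set.mem_iInter, Set.mem_setOf_eq]
      rw [hcoe]
      exact isClosed_iInter fun c => isClosed_eq (by fun_prop) continuous_const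
    have hRtop : R = ⊤ := hfull R hRcl ((hRmem p).mpr hcon)
    have h3 : h * h * h = 0 := by
      have : h ∈ R := by rw [hRtop]; exact TwoSidedIdeal.mem_top A
      exact (hRmem h).mp this h
    have h4 : h * h * (h * h) = 0 := by rw [← mul_assoc, h3, zero_mul]
    have h5 : ‖h * h‖ * ‖h * h‖ = 0 := by
      rw [← CStarRing.norm_star_mul_self, star_mul, hsh, h4, norm_zero]
    have h6 : h * h = 0 := by
      rw [← norm_eq_zero]
      exact mul_self_eq_zero.mp h5
    have h7 : ‖h‖ * ‖h‖ = 0 := by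
      rw [← CStarRing.norm_star_mul_self, hsh, h6, norm_zero]
    exact hhne (by rw [← norm_eq_zero]; exact mul_self_eq_zero.mp h7)
  obtain ⟨c, hzne⟩ := hstepA
  -- Step B : positive nonzero element of the corner
  set z : A := h * c * p with hzdef
  set a : A := p * (star c * (h * (h * c))) * p with hadef
  have hstarz : star z = p * (star c * h) := by
    rw [hzdef]
    simp [star_mul, hps, hsh, mul_assoc]
  have hzz : star z * z = a := by
    rw [hstarz, hzdef, hadef]
    simp only [mul_assoc]
  have ha0 : 0 ≤ a := hzz ▸ star_mul_self_nonneg z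
  have hane : a ≠ 0 := fun hc0 => hzne (by
    have : star z * z = 0 := by rw [hzz, hc0]
    exact CStarRing.star_mul_self_eq_zero_iff z |>.mp this)
  have hamem : a ∈ CornerSet p := sandwich_mem_corner hpp _
  -- Step C : infinite projection in the corner hereditary subalgebra of a
  obtain ⟨e, s, hemem, hsmem, heid, hestar, hene, hecl, hsse, hess, hssne⟩ :=
    hcorner_pi a hamem ha0 hane
  have hecl' : e ∈ closure {w : A | ∃ y : A, w = a * y * a} := by
    refine closure_mono ?_ hecl
    rintro w ⟨y, -, hy⟩
    exact ⟨y, hy⟩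
  have hnorme : ‖e‖ = 1 := by
    have h2 : ‖e‖ ≠ 0 := norm_ne_zero_iff.mpr hene
    have h1 : ‖e‖ * ‖e‖ = 1 * ‖e‖ := by
      rw [← CStarRing.norm_star_mul_self, hestar, heid.eq, one_mul]
    exact mul_right_cancel₀ h2 h1
  -- Step D/E : the partial isometry moving e into her(h)
  have hsa : IsSelfAdjoint a := .of_nonneg ha0
  set en : ℕ → ℝ := fun n => 1 / ((n : ℝ) + 1) with hendef
  have hen : ∀ n, 0 < en n := fun n => by positivity
  have hmono : ∀ {N n : ℕ}, N ≤ n → en n ≤ en N := by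
    intro N n hNn
    apply one_div_le_one_div_of_le (by positivity)
    have : (N : ℝ) ≤ n := Nat.cast_le.mpr hNn
    linarith
  set g : ℕ → A := fun n => cfcₙ (cornerAux (en n)) a with hgdef
  have hgsa : ∀ n, star (g n) = g n := by
    intro n
    exact (cfcₙ_predicate (cornerAux (en n)) a : IsSelfAdjoint _).star_eq
  set seq : ℕ → A := fun n => z * g n * e with hseqdef
  have hstar_seq : ∀ n, star (seq n) = e * (g n * star z) := by
    intro n
    show star (z * g n * e) = _
    rw [star_mul, star_mul, hestar, hgsa n]
  have hzzX : ∀ x : A, star z * (z * x) = a * x := fun x => by rw [← mul_assoc, hzz]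
  have hmul_seq : ∀ n m, star (seq n) * seq m = e * (g n * a * g m) * e := by
    intro n m
    rw [hstar_seq n]
    show e * (g n * star z) * (z * g m * e) = _
    simp only [mul_assoc, hzzX]
  have hkey : ∀ η : ℝ, 0 < η → ∃ N : ℕ, ∀ n m : ℕ, N ≤ n → N ≤ m →
      ‖g n * a * g m * e - e‖ ≤ η := by
    intro η hη
    obtain ⟨ε₀, hε₀, hconv⟩ := approxUnit ha0 hecl' hη
    obtain ⟨N, hN⟩ := exists_nat_one_div_lt hε₀
    refine ⟨N, fun n m hn hm => ?_⟩
    exact hconv (en n) (en m) (hen n) ((hmono hn).trans hN.le) (hen m)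
      ((hmono hm).trans hN.le)
  have hEe : ∀ n m, star (seq n) * seq m - e = e * (g n * a * g m * e - e) := by
    intro n m
    rw [hmul_seq n m, mul_sub, heid.eq, mul_assoc]
  have hnorm_Ee : ∀ n m, ‖star (seq n) * seq m - e‖ ≤ ‖g n * a * g m * e - e‖ := by
    intro n m
    rw [hEe n m]
    calc ‖e * (g n * a * g m * e - e)‖ ≤ ‖e‖ * ‖g n * a * g m * e - e‖ := norm_mul_le _ _
    _ = ‖g n * a * g m * e - e‖ := by rw [hnorme, one_mul]
  -- the sequence is Cauchy
  have hcauchy : CauchySeq seq := by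
    rw [Metric.cauchySeq_iff]
    intro r hr
    obtain ⟨N, hN⟩ := hkey (r * r / 5) (by positivity)
    refine ⟨N, fun m hm n hn => ?_⟩
    rw [dist_eq_norm]
    apply norm_lt_aux _ hr
    have hexp : star (seq m - seq n) * (seq m - seq n) =
        (star (seq m) * seq m - e) - (star (seq m) * seq n - e)
          - (star (seq n) * seq m - e) + (star (seq n) * seq n - e) := by
      rw [star_sub, sub_mul, mul_sub, mul_sub]
      abel
    rw [hexp]
    have b1 := (hnorm_Ee m m).trans (hN m m hm hm)
    have b2 := (hnorm_Ee m n).trans (hN m n hm hn)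
    have b3 := (hnorm_Ee n m).trans (hN n m hn hm)
    have b4 := (hnorm_Ee n n).trans (hN n n hn hn)
    calc ‖(star (seq m) * seq m - e) - (star (seq m) * seq n - e)
          - (star (seq n) * seq m - e) + (star (seq n) * seq n - e)‖
        ≤ ‖(star (seq m) * seq m - e) - (star (seq m) * seq n - e)
          - (star (seq n) * seq m - e)‖ + ‖star (seq n) * seq n - e‖ := norm_add_le _ _
      _ ≤ ‖(star (seq m) * seq m - e) - (star (seq m) * seq n - e)‖
          + ‖star (seq n) * seq m - e‖ + ‖star (seq n) * seq n - e‖ := by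
          gcongr
          exact norm_sub_le _ _
      _ ≤ ‖star (seq m) * seq m - e‖ + ‖star (seq m) * seq n - e‖
          + ‖star (seq n) * seq m - e‖ + ‖star (seq n) * seq n - e‖ := by
          gcongr
          exact norm_sub_le _ _
      _ ≤ r*r/5 + r*r/5 + r*r/5 + r*r/5 := by gcongr
      _ < r * r := by nlinarith
  obtain ⟨v, hv⟩ := cauchySeq_tendsto_of_complete hcauchy
  -- star v * v = e
  have hvv : star v * v = e := by
    have h1 : Filter.Tendsto (fun n => star (seq n) * seq n) Filter.atTop (nhds (star v * v)) :=
      (hv.star).mul hv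
    have h2 : Filter.Tendsto (fun n => star (seq n) * seq n) Filter.atTop (nhds e) := by
      rw [Metric.tendsto_atTop]
      intro r hr
      obtain ⟨N, hN⟩ := hkey (r/2) (by positivity)
      refine ⟨N, fun n hn => ?_⟩
      rw [dist_eq_norm]
      calc ‖star (seq n) * seq n - e‖ ≤ ‖g n * a * g n * e - e‖ := hnorm_Ee n n
      _ ≤ r/2 := hN n n hn hn
      _ < r := by linarith
    exact tendsto_nhds_unique h1 h2
  -- v * star v lies in the hereditary subalgebra of h
  have hvmem : v * star v ∈ closure {w : A | ∃ y ∈ (Set.univ : Set A), w = h * y * h} := by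
    have h3 : Filter.Tendsto (fun n => seq n * star (seq n)) Filter.atTop
        (nhds (v * star v)) := hv.mul hv.star
    refine mem_closure_of_tendsto h3 (Filter.Eventually.of_forall fun n => ?_)
    refine ⟨c * (p * (g n * (e * (e * (g n * (p * star c)))))), trivial, ?_⟩
    rw [hstar_seq n, hstarz]
    show z * g n * e * (e * (g n * (p * (star c * h)))) = _
    rw [hzdef]
    simp only [mul_assoc]
  -- Step F : algebraic verification
  have hse : s * e = s := by
    have hx : star (s * e - s) * (s * e - s) = 0 := by
      have hexp : star (s * e - s) * (s * e - s)
          = e * (star s * s) * e - e * (star s * s) - (star s * s) * e + star s * s := by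
        rw [star_sub, star_mul, hestar]
        noncomm_ring
      rw [hexp, hsse, heid.eq]
      simp only [heid.eq]
      abel
    have h0 := CStarRing.star_mul_self_eq_zero_iff (s * e - s) |>.mp hx
    rwa [sub_eq_zero] at h0
  have htse : (s * star s) * e = s * star s := by
    have := congrArg star hess
    simpa only [star_mul, star_star, hestar, mul_assoc] using this
  have hes : e * s = s := by
    have hx : (e * s - s) * star (e * s - s) = 0 := by
      have hexp : (e * s - s) * star (e * s - s)
          = e * (s * star s) * e - e * (s * star s) - (s * star s) * e + s * star s := by
        rw [star_sub, star_mul, hestar]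
        noncomm_ring
      rw [hexp, hess, htse]
      abel
    have h0 := CStarRing.mul_star_self_eq_zero_iff (e * s - s) |>.mp hx
    rwa [sub_eq_zero] at h0
  have hve : v * e = v := by
    have hx : star (v * e - v) * (v * e - v) = 0 := by
      have hexp : star (v * e - v) * (v * e - v)
          = e * (star v * v) * e - e * (star v * v) - (star v * v) * e + star v * v := by
        rw [star_sub, star_mul, hestar]
        noncomm_ring
      rw [hexp, hvv, heid.eq]
      simp only [heid.eq]
      abel
    have h0 := CStarRing.star_mul_self_eq_zero_iff (v * e - v) |>.mp hx
    rwa [sub_eq_zero] at h0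
  have hev : e * star v = star v := by
    have := congrArg star hve
    simpa only [star_mul, hestar] using this
  have hse' : star s * e = star s := by
    have := congrArg star hes
    simpa only [star_mul, hestar] using this
  have hes' : e * star s = star s := by
    have := congrArg star hse
    simpa only [star_mul, hestar] using this
  -- the witnesses
  refine ⟨v * star v, v * (s * star v), trivial, trivial, ?_, ?_, ?_, hvmem, ?_, ?_, ?_⟩
  · -- idempotent
    show (v * star v) * (v * star v) = v * star v
    have hexp : (v * star v) * (v * star v) = v * ((star v * v) * star v) := by noncomm_ring
    rw [hexp, hvv, hev]
  · rw [star_mul, star_star]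
  · -- nonzero
    intro h0
    have hv0 : v = 0 := CStarRing.mul_star_self_eq_zero_iff v |>.mp h0
    apply hene
    rw [← hvv, hv0, mul_zero]
  · -- star s' * s' = e'
    have hstars' : star (v * (s * star v)) = (v * star s) * star v := by
      simp only [star_mul, star_star, mul_assoc]
    rw [hstars']
    have hexp : ((v * star s) * star v) * (v * (s * star v))
        = v * (star s * ((star v * v) * (s * star v))) := by noncomm_ring
    rw [hexp, hvv, ← mul_assoc e s (star v), hes, ← mul_assoc (star s) s (star v), hsse, hev]
  · -- e' * (s' * star s') = s' * star s'
    have hstars' : star (v * (s * star v)) = (v * star s) * star v := by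
      simp only [star_mul, star_star, mul_assoc]
    have hT : (v * (s * star v)) * star (v * (s * star v)) = v * ((s * star s) * star v) := by
      rw [hstars']
      have hexp2 : (v * (s * star v)) * ((v * star s) * star v)
          = v * (s * ((star v * v) * (star s * star v))) := by noncomm_ring
      rw [hexp2, hvv, ← mul_assoc e (star s) (star v), hes', ← mul_assoc s (star s) (star v)]
    rw [hT]
    have hexp3 : (v * star v) * (v * ((s * star s) * star v))
        = v * ((star v * v) * ((s * star s) * star v)) := by noncomm_ring
    rw [hexp3, hvv, ← mul_assoc e (s * star s) (star v), hess]
  · -- s' * star s' ≠ e'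
    intro hEq
    apply hssne
    have hstars' : star (v * (s * star v)) = (v * star s) * star v := by
      simp only [star_mul, star_star, mul_assoc]
    have hT : (v * (s * star v)) * star (v * (s * star v)) = v * ((s * star s) * star v) := by
      rw [hstars']
      have hexp2 : (v * (s * star v)) * ((v * star s) * star v)
          = v * (s * ((star v * v) * (star s * star v))) := by noncomm_ring
      rw [hexp2, hvv, ← mul_assoc e (star s) (star v), hes', ← mul_assoc s (star s) (star v)]
    rw [hT] at hEq
    have h2 : star v * (v * ((s * star s) * star v)) * v = star v * (v * star v) * v := by
      rw [hEq]
    have hexp4 : star v * (v * ((s * star s) * star v)) * v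
        = (star v * v) * ((s * star s) * (star v * v)) := by noncomm_ring
    have hexp5 : star v * (v * star v) * v = (star v * v) * (star v * v) := by noncomm_ring
    rw [hexp4, hexp5, hvv, htse, hess, heid.eq] at h2
    exact h2


/-- If `p` is a full projection in a C*-algebra `A` and the corner `pAp`
is simple and purely infinite, then `A` is simple and purely infinite. -/
theorem simple_purelyInfinite_of_full_corner
    (p : A) (hp_proj : IsIdempotentElem p ∧ star p = p)
    (hfull : ∀ I : TwoSidedIdeal A, IsClosed (I : Set A) → p ∈ I → I = ⊤)
    (hcorner_simple : SimpleOn (CornerSet p))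
    (hcorner_pi : PurelyInfiniteOn (CornerSet p)) :
    SimpleOn (Set.univ : Set A) ∧ PurelyInfiniteOn (Set.univ : Set A) := by
  constructor
  · exact simple_part p hp_proj hfull hcorner_simple
  · exact pi_part p hp_proj hfull hcorner_pi
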